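/- Consider the chemostat dynamics in transformed coordinates: if y(t) ≤ 0 then ẏ(t) = a·D_s·((G·exp(−y(t))+1)/(G+1))·(1−exp(y(t))), and if y(t) > 0 then ẏ(t) = D_s·g(y(t))·(G·exp(−y(t))+1)·exp(x(t))·(1−exp(y(t))), where a, D_s, G > 0 and g(y) > 0. Then the function V(t) = y(t)² is non-increasing along any solution, and hence |y(t)| ≤ max_{θ∈[−r,0]} |y(θ)| for all t ≥ 0 in the interval of existence. -/

import Mathlib

/-- Along the transformed chemostat dynamics, `V(t) = y(t)²` is non-increasing
for `t ≥ 0`, hence `|y(t)| ≤ max_{θ ∈ [−r,0]} |y(θ)|` for all `t ≥ 0`. -/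
theorem chemostat_y_nonincreasing (a Ds G r : ℝ)
    (ha : 0 < a) (hDs : 0 < Ds) (hG : 0 < G) (hr : 0 ≤ r)
    (g : ℝ → ℝ) (hg : ∀ s, 0 < g s) (hgc : Continuous g)
    (x y : ℝ → ℝ) (hyc : ContinuousOn y (Set.Icc (-r) 0))
    (hy : ∀ t : ℝ, 0 ≤ t →
      HasDerivAt y
        (if y t ≤ 0 then
          a * Ds * ((G * Real.exp (-y t) + 1) / (G + 1)) * (1 - Real.exp (y t))
        else
          Ds * g (y t) * (G * Real.exp (-y t) + 1) * Real.exp (x t)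
            * (1 - Real.exp (y t))) t) :
    (∀ t₁ t₂ : ℝ, 0 ≤ t₁ → t₁ ≤ t₂ → (y t₂) ^ 2 ≤ (y t₁) ^ 2) ∧
      ∀ t : ℝ, 0 ≤ t → |y t| ≤ sSup ((fun θ => |y θ|) '' Set.Icc (-r) 0) := by
  set f : ℝ → ℝ := fun t =>
    if y t ≤ 0 then
      a * Ds * ((G * Real.exp (-y t) + 1) / (G + 1)) * (1 - Real.exp (y t))
    else
      Ds * g (y t) * (G * Real.exp (-y t) + 1) * Real.exp (x t)
        * (1 - Real.exp (y t)) with hf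
  have hV : ∀ t : ℝ, 0 ≤ t → HasDerivAt (fun t => (y t) ^ 2) (2 * y t * f t) t := by
    intro t ht
    have h := (hy t ht).fun_pow 2
    refine h.congr_deriv ?_
    simp only [hf]
    split_ifs <;> ring
  have hsign : ∀ t : ℝ, 0 ≤ t → 2 * y t * f t ≤ 0 := by
    intro t ht
    have hpos : 0 < G * Real.exp (-y t) + 1 := by positivity
    by_cases hyt : y t ≤ 0
    · have h1 : 0 ≤ 1 - Real.exp (y t) := by
        have := Real.exp_le_one_iff.mpr hyt
        linarith
      have hf0 : 0 ≤ f t := by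
        simp only [hf, if_pos hyt]
        have : 0 < (G * Real.exp (-y t) + 1) / (G + 1) := by positivity
        positivity
      have : 2 * y t * f t = 2 * (y t * f t) := by ring
      rw [this]
      exact mul_nonpos_of_nonneg_of_nonpos (by norm_num) (mul_nonpos_of_nonpos_of_nonneg hyt hf0)
        |>.trans_eq rfl
    · push_neg at hyt
      have h1 : 1 - Real.exp (y t) ≤ 0 := by
        have := Real.add_one_le_exp (y t)
        linarith
      have hf0 : f t ≤ 0 := by
        simp only [hf, if_neg (not_le.mpr hyt)]
        have h2 : 0 < Ds * g (y t) * (G * Real.exp (-y t) + 1) * Real.exp (x t) := by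
          have := hg (y t); positivity
        exact mul_nonpos_of_nonneg_of_nonpos h2.le h1
      have h3 : 0 ≤ 2 * y t := by linarith
      exact mul_nonpos_of_nonneg_of_nonpos h3 hf0
  have hmono : ∀ t₁ t₂ : ℝ, 0 ≤ t₁ → t₁ ≤ t₂ → (y t₂) ^ 2 ≤ (y t₁) ^ 2 := by
    intro t₁ t₂ h1 h12
    have hanti : AntitoneOn (fun t => (y t) ^ 2) (Set.Ici (0:ℝ)) := by
      apply antitoneOn_of_deriv_nonpos (convex_Ici 0)
      · intro t ht
        exact (hV t ht).continuousAt.continuousWithinAt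
      · intro t ht
        rw [interior_Ici] at ht
        exact (hV t ht.le).differentiableAt.differentiableWithinAt
      · intro t ht
        rw [interior_Ici] at ht
        rw [(hV t ht.le).deriv]
        exact hsign t ht.le
    exact hanti h1 (h1.trans h12) h12
  refine ⟨hmono, fun t ht => ?_⟩
  have h0 : |y t| ≤ |y 0| := by
    have := hmono 0 t le_rfl ht
    calc |y t| = Real.sqrt ((y t) ^ 2) := (Real.sqrt_sq_eq_abs _).symm
    _ ≤ Real.sqrt ((y 0) ^ 2) := Real.sqrt_le_sqrt this
    _ = |y 0| := Real.sqrt_sq_eq_abs _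
  refine h0.trans (le_csSup ?_ ?_)
  · exact (isCompact_Icc.image_of_continuousOn (hyc.abs)).bddAbove
  · exact ⟨0, by simp [hr], rfl⟩
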